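/- Let F be a field, d ∈ ℕ, and suppose rank : (F^∞)^{⊗d} → ℝ₊ satisfies the linear core property (with some constants L, β > 0 and rank threshold r₀), monotonicity under restrictions, and the restriction Lipschitz property. Then for every σ ∈ (0,1] there exist constants C, κ > 0 such that for every n₁,…,n_d ∈ ℕ and every d-tensor T : [n₁]×⋯×[n_d] → F: if I₁,…,I_d are independent random subsets with I_i ~ [n_i]_σ, then Pr[rank(T_{|I₁×⋯×I_d}) ≥ κ·rank(T)] ≥ 1 − C·e^{−κ·rank(T)}. -/

import Mathlib

/-- `(F^∞)^{⊗d}`: the space of finitely supported `d`-tensors over `F`,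
i.e. finitely supported maps `ℕ^d → F`. -/
abbrev TensorD (F : Type*) [Zero F] (d : ℕ) := (Fin d → ℕ) →₀ F

/-- The restriction (sub-tensor) `T_{|I₁×⋯×I_d}` of a tensor `T`,
obtained by zeroing out all entries outside `I₁×⋯×I_d`. -/
def trestrict {F : Type*} [Zero F] {d : ℕ} (T : TensorD F d) (I : Fin d → Finset ℕ) :
    TensorD F d :=
  T.filter (fun x => ∀ i, x i ∈ I i)

open Classical in
/-- The probability of the event `E` when, for each `i : Fin d`, a subset `Iᵢ ⊆ [nᵢ]` is
chosen at random, each element independently with probability `σ`. -/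
noncomputable def tensorPr {d : ℕ} (n : Fin d → ℕ) (σ : ℝ)
    (E : (∀ i : Fin d, Finset (Fin (n i))) → Prop) : ℝ :=
  ∑ I : (∀ i : Fin d, Finset (Fin (n i))),
    if E I then ∏ i, σ ^ (I i).card * (1 - σ) ^ (n i - (I i).card) else 0


set_option linter.unusedSectionVars false

namespace RRaux
open Finset

variable {α : Type*} [DecidableEq α]

noncomputable def exS (s : Finset α) (σ : ℝ) (f : Finset α → ℝ) : ℝ :=
  ∑ I ∈ s.powerset, σ ^ I.card * (1 - σ) ^ (s.card - I.card) * f I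

lemma exS_congr {s : Finset α} {σ : ℝ} {f g : Finset α → ℝ}
    (h : ∀ I ⊆ s, f I = g I) : exS s σ f = exS s σ g :=
  Finset.sum_congr rfl fun I hI => by rw [h I (mem_powerset.1 hI)]

lemma exS_empty (σ : ℝ) (f : Finset α → ℝ) : exS ∅ σ f = f ∅ := by
  simp [exS]

lemma exS_insert {a : α} {s : Finset α} (ha : a ∉ s) (σ : ℝ) (f : Finset α → ℝ) :
    exS (insert a s) σ f
      = σ * exS s σ (fun I => f (insert a I)) + (1 - σ) * exS s σ f := by
  unfold exS
  rw [sum_powerset_insert ha, mul_sum, mul_sum, add_comm]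
  congr 1
  · refine sum_congr rfl fun I hI => ?_
    have haI : a ∉ I := fun h => ha (mem_powerset.1 hI h)
    have hIs : I.card ≤ s.card := card_le_card (mem_powerset.1 hI)
    rw [card_insert_of_notMem haI, card_insert_of_notMem ha]
    have h2 : s.card + 1 - (I.card + 1) = s.card - I.card := by omega
    rw [h2]; ring
  · refine sum_congr rfl fun I hI => ?_
    have hIs : I.card ≤ s.card := card_le_card (mem_powerset.1 hI)
    rw [card_insert_of_notMem ha]
    have h2 : s.card + 1 - I.card = (s.card - I.card) + 1 := by omega
    rw [h2]; ring

lemma exS_const (s : Finset α) (σ : ℝ) (c : ℝ) : exS s σ (fun _ => c) = c := by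
  induction s using Finset.induction with
  | empty => simp [exS]
  | insert _ _ ha ih => rw [exS_insert ha]; rw [ih]; ring

lemma exS_nonneg {s : Finset α} {σ : ℝ} (h0 : 0 ≤ σ) (h1 : σ ≤ 1) {f : Finset α → ℝ}
    (hf : ∀ I ⊆ s, 0 ≤ f I) : 0 ≤ exS s σ f :=
  Finset.sum_nonneg fun I hI =>
    mul_nonneg (mul_nonneg (pow_nonneg h0 _) (pow_nonneg (by linarith) _))
      (hf I (mem_powerset.1 hI))

lemma exS_mono {s : Finset α} {σ : ℝ} (h0 : 0 ≤ σ) (h1 : σ ≤ 1) {f g : Finset α → ℝ}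
    (hfg : ∀ I ⊆ s, f I ≤ g I) : exS s σ f ≤ exS s σ g :=
  Finset.sum_le_sum fun I hI =>
    mul_le_mul_of_nonneg_left (hfg I (mem_powerset.1 hI))
      (mul_nonneg (pow_nonneg h0 _) (pow_nonneg (by linarith) _))

lemma exS_add (s : Finset α) (σ : ℝ) (f g : Finset α → ℝ) :
    exS s σ (fun I => f I + g I) = exS s σ f + exS s σ g := by
  unfold exS
  rw [← sum_add_distrib]
  exact sum_congr rfl fun I _ => by ring

lemma exS_mul_left (s : Finset α) (σ : ℝ) (c : ℝ) (f : Finset α → ℝ) :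
    exS s σ (fun I => c * f I) = c * exS s σ f := by
  unfold exS
  rw [mul_sum]
  exact sum_congr rfl fun I _ => by ring

lemma exS_sum {ι : Type*} (s : Finset α) (σ : ℝ) (t : Finset ι) (f : ι → Finset α → ℝ) :
    exS s σ (fun I => ∑ j ∈ t, f j I) = ∑ j ∈ t, exS s σ (f j) := by
  unfold exS
  rw [Finset.sum_comm]
  exact sum_congr rfl fun I _ => by rw [mul_sum]

lemma exS_one (s : Finset α) (f : Finset α → ℝ) : exS s 1 f = f s := by
  induction s using Finset.induction generalizing f with
  | empty => simp [exS]
  | insert _ _ ha ih =>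
      rw [exS_insert ha, ih, ih]; ring

lemma exS_mul (s : Finset α) (τ ρ : ℝ) (f : Finset α → ℝ) :
    exS s (τ * ρ) f = exS s τ (fun A => exS s ρ (fun B => f (A ∩ B))) := by
  induction s using Finset.induction generalizing f with
  | empty => rw [exS_empty, exS_empty, exS_empty, Finset.empty_inter]
  | @insert a s ha ih =>
      have hIns : ∀ A B : Finset α, insert a A ∩ insert a B = insert a (A ∩ B) := by
        intro A B; ext x; simp [mem_insert, mem_inter]; tauto
      have h1 : ∀ A ⊆ s, exS (insert a s) ρ (fun B => f (A ∩ B))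
          = exS s ρ (fun B => f (A ∩ B)) := by
        intro A hA
        rw [exS_insert ha]
        have : exS s ρ (fun B => f (A ∩ insert a B)) = exS s ρ (fun B => f (A ∩ B)) := by
          refine exS_congr fun B _ => ?_
          rw [Finset.inter_insert_of_notMem (fun h => ha (hA h))]
        rw [this]; ring
      have h2 : ∀ A ⊆ s, exS (insert a s) ρ (fun B => f (insert a A ∩ B))
          = ρ * exS s ρ (fun B => f (insert a (A ∩ B)))
            + (1 - ρ) * exS s ρ (fun B => f (A ∩ B)) := by
        intro A hA
        rw [exS_insert ha]
        congr 1
        · congr 1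
          exact exS_congr fun B _ => by rw [hIns]
        · congr 1
          refine exS_congr fun B hB => ?_
          rw [Finset.insert_inter_of_notMem (fun h => ha (hB h))]
      rw [exS_insert ha (τ * ρ), exS_insert ha τ, ih, ih]
      have houter1 : exS s τ (fun A => exS (insert a s) ρ (fun B => f (insert a A ∩ B)))
          = ρ * exS s τ (fun A => exS s ρ (fun B => f (insert a (A ∩ B))))
            + (1 - ρ) * exS s τ (fun A => exS s ρ (fun B => f (A ∩ B))) := by
        rw [← exS_mul_left, ← exS_mul_left, ← exS_add]
        exact exS_congr fun A hA => h2 A hA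
      have houter2 : exS s τ (fun A => exS (insert a s) ρ (fun B => f (A ∩ B)))
          = exS s τ (fun A => exS s ρ (fun B => f (A ∩ B))) :=
        exS_congr fun A hA => h1 A hA
      rw [houter1, houter2]
      ring

open Classical in
noncomputable def ind (P : Prop) : ℝ := if P then 1 else 0

lemma ind_pos {P : Prop} (h : P) : ind P = 1 := if_pos h
lemma ind_neg {P : Prop} (h : ¬ P) : ind P = 0 := if_neg h
lemma ind_nonneg (P : Prop) : 0 ≤ ind P := by
  unfold ind; split <;> norm_num
lemma ind_le_one (P : Prop) : ind P ≤ 1 := by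
  unfold ind; split <;> norm_num
lemma ind_mono {P Q : Prop} (h : P → Q) : ind P ≤ ind Q := by
  by_cases hP : P
  · rw [ind_pos hP, ind_pos (h hP)]
  · rw [ind_neg hP]; exact ind_nonneg Q
lemma ind_congr {P Q : Prop} (h : P ↔ Q) : ind P = ind Q := by
  by_cases hP : P
  · rw [ind_pos hP, ind_pos (h.1 hP)]
  · rw [ind_neg hP, ind_neg (fun hq => hP (h.2 hq))]

noncomputable def prS (s : Finset α) (σ : ℝ) (E : Finset α → Prop) : ℝ :=
  exS s σ (fun I => ind (E I))

lemma prS_nonneg {s : Finset α} {σ : ℝ} (h0 : 0 ≤ σ) (h1 : σ ≤ 1) (E : Finset α → Prop) :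
    0 ≤ prS s σ E :=
  exS_nonneg h0 h1 fun I _ => ind_nonneg _

lemma prS_le_one {s : Finset α} {σ : ℝ} (h0 : 0 ≤ σ) (h1 : σ ≤ 1) (E : Finset α → Prop) :
    prS s σ E ≤ 1 := by
  have h : prS s σ E ≤ exS s σ (fun _ => 1) :=
    exS_mono h0 h1 fun I _ => ind_le_one _
  simpa [exS_const] using h

lemma prS_mono {s : Finset α} {σ : ℝ} (h0 : 0 ≤ σ) (h1 : σ ≤ 1) {E E' : Finset α → Prop}
    (h : ∀ I ⊆ s, E I → E' I) : prS s σ E ≤ prS s σ E' :=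
  exS_mono h0 h1 fun I hI => ind_mono (h I hI)

lemma prS_congr {s : Finset α} (σ : ℝ) {E E' : Finset α → Prop}
    (h : ∀ I ⊆ s, E I ↔ E' I) : prS s σ E = prS s σ E' :=
  exS_congr fun I hI => ind_congr (h I hI)

lemma prS_compl (s : Finset α) (σ : ℝ) (E : Finset α → Prop) :
    prS s σ E + prS s σ (fun I => ¬ E I) = 1 := by
  unfold prS
  rw [← exS_add]
  have h : exS s σ (fun I => ind (E I) + ind (¬ E I)) = exS s σ (fun _ => 1) := by
    refine exS_congr fun I _ => ?_
    by_cases hE : E I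
    · rw [ind_pos hE, ind_neg (not_not_intro hE)]; norm_num
    · rw [ind_neg hE, ind_pos hE]; norm_num
  rw [h, exS_const]

lemma prS_false (s : Finset α) (σ : ℝ) : prS s σ (fun _ => False) = 0 := by
  unfold prS
  have h : exS s σ (fun I => ind False) = exS s σ (fun _ => 0) :=
    exS_congr fun I _ => ind_neg not_false
  rw [h, exS_const]

lemma prS_insert {a : α} {s : Finset α} (ha : a ∉ s) (σ : ℝ) (E : Finset α → Prop) :
    prS (insert a s) σ E
      = σ * prS s σ (fun I => E (insert a I)) + (1 - σ) * prS s σ E :=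
  exS_insert ha σ _

lemma prS_one (s : Finset α) (E : Finset α → Prop) :
    prS s 1 E = ind (E s) := exS_one s _

lemma prS_disjoint {s : Finset α} {σ : ℝ} :
    ∀ K ⊆ s, prS s σ (fun I => Disjoint K I) = (1 - σ) ^ K.card := by
  induction s using Finset.induction with
  | empty =>
      intro K hK
      rw [Finset.subset_empty.1 hK]
      unfold prS
      rw [exS_empty, ind_pos (Finset.disjoint_empty_left _)]
      simp
  | @insert a s ha ih =>
      intro K hK
      rw [prS_insert ha]
      by_cases haK : a ∈ K
      · have e1 : prS s σ (fun I => Disjoint K (insert a I)) = 0 := by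
          have h : prS s σ (fun I => Disjoint K (insert a I)) = prS s σ (fun _ => False) :=
            prS_congr σ fun I _ =>
              ⟨fun hd => (Finset.disjoint_left.1 hd haK) (mem_insert_self a I), False.elim⟩
          rw [h, prS_false]
        have e2 : prS s σ (fun I => Disjoint K I) = (1 - σ) ^ (K.erase a).card := by
          have h : prS s σ (fun I => Disjoint K I)
              = prS s σ (fun I => Disjoint (K.erase a) I) := by
            refine prS_congr σ fun I hI => ?_
            have haI : a ∉ I := fun h => ha (hI h)
            constructor
            · exact fun hd => hd.mono_left (erase_subset a K)
            · intro hd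
              have hsub : K ⊆ insert a (K.erase a) := by
                intro x hx
                by_cases hxa : x = a
                · rw [hxa]; exact mem_insert_self _ _
                · exact mem_insert_of_mem (mem_erase.2 ⟨hxa, hx⟩)
              refine Finset.disjoint_left.2 fun x hx hxI => ?_
              rcases mem_insert.1 (hsub hx) with h | h
              · exact haI (h ▸ hxI)
              · exact (Finset.disjoint_left.1 hd h) hxI
          rw [h]
          exact ih (K.erase a) ((Finset.subset_insert_iff).1 hK)
        rw [e1, e2, card_erase_of_mem haK]
        have hc : 1 ≤ K.card := card_pos.2 ⟨a, haK⟩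
        have h4 : (1 - σ) ^ K.card = (1 - σ) * (1 - σ) ^ (K.card - 1) := by
          conv_lhs => rw [show K.card = (K.card - 1) + 1 by omega]
          rw [pow_succ]; ring
        rw [h4]; ring
      · have hKs : K ⊆ s := fun x hx => by
          rcases mem_insert.1 (hK hx) with h | h
          · exact absurd (h ▸ hx) haK
          · exact h
        have e1 : prS s σ (fun I => Disjoint K (insert a I)) = (1 - σ) ^ K.card := by
          have h : prS s σ (fun I => Disjoint K (insert a I))
              = prS s σ (fun I => Disjoint K I) := by
            refine prS_congr σ fun I _ => ?_
            rw [Finset.disjoint_insert_right]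
            exact ⟨fun h => h.2, fun h => ⟨haK, h⟩⟩
          rw [h]; exact ih K hKs
        rw [e1, ih K hKs]
        ring

lemma prS_sdiff_card_le {s : Finset α} {σ : ℝ} (h0 : 0 ≤ σ) (h1 : σ ≤ 1)
    {K : Finset α} (hK : K ⊆ s) (m : ℕ) :
    prS s σ (fun I => m ≤ (K \ I).card) ≤ (K.card.choose m : ℝ) * (1 - σ) ^ m := by
  have key : ∀ I ⊆ s, ind (m ≤ (K \ I).card)
      ≤ ∑ K' ∈ K.powersetCard m, ind (Disjoint K' I) := by
    intro I _
    by_cases h : m ≤ (K \ I).card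
    · rw [ind_pos h]
      obtain ⟨K', hK'sub, hK'card⟩ := Finset.exists_subset_card_eq h
      have hmem : K' ∈ K.powersetCard m :=
        Finset.mem_powersetCard.2 ⟨hK'sub.trans sdiff_subset, hK'card⟩
      have hdisj : Disjoint K' I :=
        Finset.disjoint_left.2 fun x hx hxI => (mem_sdiff.1 (hK'sub hx)).2 hxI
      rw [← ind_pos hdisj]
      exact Finset.single_le_sum (f := fun K' => ind (Disjoint K' I))
        (fun j _ => ind_nonneg _) hmem
    · rw [ind_neg h]
      exact Finset.sum_nonneg fun j _ => ind_nonneg _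
  calc prS s σ (fun I => m ≤ (K \ I).card)
      ≤ exS s σ (fun I => ∑ K' ∈ K.powersetCard m, ind (Disjoint K' I)) :=
        exS_mono h0 h1 key
    _ = ∑ K' ∈ K.powersetCard m, prS s σ (fun I => Disjoint K' I) :=
        exS_sum s σ _ _
    _ = ∑ K' ∈ K.powersetCard m, (1 - σ) ^ m := by
        refine sum_congr rfl fun K' hK' => ?_
        obtain ⟨hsub, hcard⟩ := Finset.mem_powersetCard.1 hK'
        rw [prS_disjoint K' (hsub.trans hK), hcard]
    _ = (K.card.choose m : ℝ) * (1 - σ) ^ m := by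
        rw [sum_const, card_powersetCard, nsmul_eq_mul]

section B
variable {α : Type*} [DecidableEq α] [Fintype α]

lemma step_lemma (g : Finset α → ℝ) (r₀ M β' τ : ℝ)
    (hβ'0 : 0 < β') (hτ0 : 0 ≤ τ) (hτ1 : τ ≤ 1)
    (hgmono : ∀ S S' : Finset α, S ⊆ S' → g S ≤ g S')
    (hglip : ∀ S S' : Finset α, S ⊆ S' → g S' ≤ g S + ((S' \ S).card : ℝ))
    (hgcore : ∀ S : Finset α, r₀ ≤ g S →
      ∃ J, J ⊆ S ∧ (J.card : ℝ) ≤ M * g S ∧ β' * g S ≤ g J)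
    (hτstep : ∀ (N : ℕ) (r : ℝ), max r₀ 1 ≤ r → (N : ℝ) ≤ M * r →
      (N.choose ⌈β' * r / 2⌉₊ : ℝ) * (1 - τ) ^ (⌈β' * r / 2⌉₊ : ℕ) ≤ Real.exp (-r))
    (S : Finset α) (hS : max r₀ 1 ≤ g S) :
    1 - Real.exp (-(g S)) ≤
      prS (univ : Finset α) τ (fun I => β' / 2 * g S ≤ g (S ∩ I)) := by
  obtain ⟨J, hJS, hJcard, hJrank⟩ := hgcore S ((le_max_left _ _).trans hS)
  set r := g S with hr
  have hr1 : (1:ℝ) ≤ r := (le_max_right _ _).trans hS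
  have hrpos : (0:ℝ) < r := lt_of_lt_of_le one_pos hr1
  set m := ⌈β' * r / 2⌉₊ with hm
  have hx0 : (0:ℝ) < β' * r / 2 := by positivity
  have himp : ∀ I : Finset α, ¬ (β' / 2 * r ≤ g (S ∩ I)) → m ≤ (J \ I).card := by
    intro I hne
    by_contra hlt
    push_neg at hlt
    have hmpos : 0 < m := Nat.ceil_pos.2 hx0
    have hcast : ((J \ I).card : ℝ) ≤ (m : ℝ) - 1 := by
      have : (J \ I).card ≤ m - 1 := by omega
      have h2 := Nat.cast_le (α := ℝ) |>.2 this
      have h3 : ((m - 1 : ℕ) : ℝ) = (m : ℝ) - 1 := by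
        have : 1 ≤ m := hmpos
        push_cast [this]; ring
      linarith [h2, h3.le]
    have hceil : (m : ℝ) < β' * r / 2 + 1 := by
      have := Nat.ceil_lt_add_one (le_of_lt hx0)
      exact_mod_cast this
    have hmlt : ((J \ I).card : ℝ) < β' * r / 2 := by linarith
    have hJI : g J ≤ g (J ∩ I) + ((J \ I).card : ℝ) := by
      have h := hglip (J ∩ I) J inter_subset_left
      rwa [Finset.sdiff_inter_self_left] at h
    have hmono2 : g (J ∩ I) ≤ g (S ∩ I) :=
      hgmono _ _ (inter_subset_inter hJS (Finset.Subset.refl I))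
    apply hne
    have hb : β' * r ≤ g J := hJrank
    linarith
  have hcompl : prS (univ : Finset α) τ (fun I => ¬ (β' / 2 * r ≤ g (S ∩ I)))
      ≤ Real.exp (-r) := by
    have h1 : prS (univ : Finset α) τ (fun I => ¬ (β' / 2 * r ≤ g (S ∩ I)))
        ≤ prS (univ : Finset α) τ (fun I => m ≤ (J \ I).card) :=
      prS_mono hτ0 hτ1 fun I _ h => himp I h
    have h2 := prS_sdiff_card_le (s := (univ : Finset α)) hτ0 hτ1 (subset_univ J) m
    have h3 := hτstep J.card r hS hJcard
    calc prS (univ : Finset α) τ (fun I => ¬ (β' / 2 * r ≤ g (S ∩ I)))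
        ≤ prS (univ : Finset α) τ (fun I => m ≤ (J \ I).card) := h1
      _ ≤ (J.card.choose m : ℝ) * (1 - τ) ^ m := h2
      _ ≤ Real.exp (-r) := h3
  have hc := prS_compl (univ : Finset α) τ (fun I => β' / 2 * r ≤ g (S ∩ I))
  linarith

lemma claim_lemma (g : Finset α → ℝ) (r₀ M β' τ : ℝ)
    (hβ'0 : 0 < β') (hβ'1 : β' ≤ 1) (hτ0 : 0 ≤ τ) (hτ1 : τ ≤ 1)
    (hg0 : ∀ S, 0 ≤ g S)
    (hgmono : ∀ S S' : Finset α, S ⊆ S' → g S ≤ g S')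
    (hglip : ∀ S S' : Finset α, S ⊆ S' → g S' ≤ g S + ((S' \ S).card : ℝ))
    (hgcore : ∀ S : Finset α, r₀ ≤ g S →
      ∃ J, J ⊆ S ∧ (J.card : ℝ) ≤ M * g S ∧ β' * g S ≤ g J)
    (hτstep : ∀ (N : ℕ) (r : ℝ), max r₀ 1 ≤ r → (N : ℝ) ≤ M * r →
      (N.choose ⌈β' * r / 2⌉₊ : ℝ) * (1 - τ) ^ (⌈β' * r / 2⌉₊ : ℕ) ≤ Real.exp (-r)) :
    ∀ (k : ℕ) (S : Finset α), max r₀ 1 ≤ (β' / 2) ^ k * g S →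
      1 - (k : ℝ) * Real.exp (-((β' / 2) ^ k * g S)) ≤
        prS (univ : Finset α) (τ ^ k) (fun I => (β' / 2) ^ k * g S ≤ g (S ∩ I)) := by
  intro k
  induction k with
  | zero =>
      intro S hS
      have h1 : prS (univ : Finset α) (τ ^ 0) (fun I => (β' / 2) ^ 0 * g S ≤ g (S ∩ I))
          = ind ((β' / 2) ^ 0 * g S ≤ g (S ∩ (univ : Finset α))) := by
        rw [pow_zero]; exact prS_one _ _
      rw [h1, ind_pos (by rw [pow_zero, one_mul, inter_univ])]
      norm_num
  | succ k ih =>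
      intro S hS
      set γ := β' / 2 with hγ
      have hγ0 : 0 < γ := by positivity
      have hγ1 : γ ≤ 1 := by rw [hγ]; linarith
      have hγk0 : (0:ℝ) < γ ^ k := pow_pos hγ0 k
      have hγk10 : (0:ℝ) < γ ^ (k+1) := pow_pos hγ0 (k+1)
      have hγk11 : γ ^ (k+1) ≤ 1 := pow_le_one₀ (le_of_lt hγ0) hγ1
      have hgS0 : 0 ≤ g S := hg0 S
      have hgSmax : max r₀ 1 ≤ g S := by
        have h2 : γ ^ (k+1) * g S ≤ g S := by nlinarith
        linarith [hS]
      have hgS1 : (1:ℝ) ≤ γ ^ (k+1) * g S := le_trans (le_max_right _ _) hS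
      have hτk0 : (0:ℝ) ≤ τ ^ k := pow_nonneg hτ0 k
      have hτk1 : τ ^ k ≤ 1 := pow_le_one₀ hτ0 hτ1
      have hstep := step_lemma g r₀ M β' τ hβ'0 hτ0 hτ1 hgmono hglip hgcore hτstep S hgSmax
      -- two-stage decomposition
      have hts : prS (univ : Finset α) (τ ^ (k+1))
            (fun I => γ ^ (k+1) * g S ≤ g (S ∩ I))
          = exS (univ : Finset α) τ (fun A => exS (univ : Finset α) (τ ^ k)
              (fun B => ind (γ ^ (k+1) * g S ≤ g (S ∩ (A ∩ B))))) := by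
        unfold prS
        rw [pow_succ']
        exact exS_mul _ _ _ _
      set E' := Real.exp (-(γ ^ (k+1) * g S)) with hE'
      have hE'0 : 0 < E' := Real.exp_pos _
      have hE'1 : E' ≤ 1 := by
        rw [hE']
        apply Real.exp_le_one_iff.2 ?_
        · linarith
      set innerval := fun A : Finset α => exS (univ : Finset α) (τ ^ k)
          (fun B => ind (γ ^ (k+1) * g S ≤ g (S ∩ (A ∩ B)))) with hinnerval
      have hinner0 : ∀ A, 0 ≤ innerval A := fun A =>
        exS_nonneg hτk0 hτk1 fun I _ => ind_nonneg _
      have hinner : ∀ A : Finset α, γ * g S ≤ g (S ∩ A) →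
          1 - (k : ℝ) * E' ≤ innerval A := by
        intro A hGA
        have h1 : γ ^ (k+1) * g S ≤ γ ^ k * g (S ∩ A) := by
          calc γ ^ (k+1) * g S = γ ^ k * (γ * g S) := by ring
            _ ≤ γ ^ k * g (S ∩ A) := mul_le_mul_of_nonneg_left hGA (le_of_lt hγk0)
        have hih := ih (S ∩ A) (le_trans hS h1)
        have hmono3 : prS (univ : Finset α) (τ ^ k)
              (fun B => γ ^ k * g (S ∩ A) ≤ g (S ∩ A ∩ B)) ≤ innerval A := by
          refine exS_mono hτk0 hτk1 fun B _ => ind_mono fun hB => ?_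
          rw [← Finset.inter_assoc]
          linarith
        have hexp : Real.exp (-(γ ^ k * g (S ∩ A))) ≤ E' := by
          rw [hE']
          exact Real.exp_le_exp.2 (by linarith)
        have hk0 : (0:ℝ) ≤ (k : ℝ) := Nat.cast_nonneg k
        have := mul_le_mul_of_nonneg_left hexp hk0
        linarith
      set c := 1 - (k : ℝ) * E' with hc
      have hpoint : ∀ A ⊆ (univ : Finset α),
          c * ind (γ * g S ≤ g (S ∩ A)) ≤ innerval A := by
        intro A _
        by_cases hGA : γ * g S ≤ g (S ∩ A)
        · rw [ind_pos hGA, mul_one]; exact hinner A hGA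
        · rw [ind_neg hGA, mul_zero]; exact hinner0 A
      have houter : c * prS (univ : Finset α) τ (fun A => γ * g S ≤ g (S ∩ A))
          ≤ exS (univ : Finset α) τ innerval := by
        calc c * prS (univ : Finset α) τ (fun A => γ * g S ≤ g (S ∩ A))
            = exS (univ : Finset α) τ (fun A => c * ind (γ * g S ≤ g (S ∩ A))) :=
              (exS_mul_left _ _ _ _).symm
          _ ≤ exS (univ : Finset α) τ innerval := exS_mono hτ0 hτ1 hpoint
      set p := prS (univ : Finset α) τ (fun A => γ * g S ≤ g (S ∩ A)) with hp
      have hp1 : p ≤ 1 := prS_le_one hτ0 hτ1 _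
      have hple : 1 - E' ≤ p := by
        have hee : Real.exp (-(g S)) ≤ E' := by
          rw [hE']
          apply Real.exp_le_exp.2
          nlinarith
        linarith [hstep]
      have hk0 : (0:ℝ) ≤ (k : ℝ) := Nat.cast_nonneg k
      have hfinal : 1 - ((k:ℝ) + 1) * E' ≤ c * p := by
        have h1 : 0 ≤ (k : ℝ) * E' * (1 - p) :=
          mul_nonneg (mul_nonneg hk0 (le_of_lt hE'0)) (by linarith)
        nlinarith
      rw [hts]
      push_cast
      calc 1 - ((k:ℝ) + 1) * E' ≤ c * p := hfinal
        _ ≤ exS (univ : Finset α) τ innerval := houter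
end B
end RRaux

section C
open Finset RRaux

variable {d : ℕ} {n : Fin d → ℕ}

def fsplit (n : Fin d → ℕ) (S : Finset ((i : Fin d) × Fin (n i))) (i : Fin d) :
    Finset (Fin (n i)) :=
  Finset.univ.filter (fun a => (⟨i, a⟩ : (i : Fin d) × Fin (n i)) ∈ S)

lemma mem_fsplit {S : Finset ((i : Fin d) × Fin (n i))} {i : Fin d} {a : Fin (n i)} :
    a ∈ fsplit n S i ↔ (⟨i, a⟩ : (i : Fin d) × Fin (n i)) ∈ S := by
  simp [fsplit]

lemma fsplit_sigma (I : ∀ i, Finset (Fin (n i))) (i : Fin d) :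
    fsplit n (Finset.univ.sigma I) i = I i := by
  ext a; simp [fsplit]

lemma sigma_fsplit (S : Finset ((i : Fin d) × Fin (n i))) :
    Finset.univ.sigma (fsplit n S) = S := by
  ext ⟨i, a⟩; simp [fsplit]

lemma card_eq_sum_fsplit (S : Finset ((i : Fin d) × Fin (n i))) :
    S.card = ∑ i, (fsplit n S i).card := by
  calc S.card = (Finset.univ.sigma (fsplit n S)).card := by rw [sigma_fsplit]
    _ = ∑ i, (fsplit n S i).card := by rw [Finset.card_sigma]

lemma tensorPr_eq_prS (σ : ℝ) (E : (∀ i : Fin d, Finset (Fin (n i))) → Prop) :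
    tensorPr n σ E
      = prS (Finset.univ : Finset ((i : Fin d) × Fin (n i))) σ (fun S => E (fsplit n S)) := by
  classical
  unfold tensorPr prS exS
  rw [Finset.powerset_univ]
  have hbij : Function.Bijective (fun I : ∀ i : Fin d, Finset (Fin (n i)) =>
      Finset.univ.sigma I) := by
    constructor
    · intro I I' h
      funext i
      have h2 : Finset.univ.sigma I = Finset.univ.sigma I' := h
      rw [← fsplit_sigma I i, ← fsplit_sigma I' i, h2]
    · intro S
      exact ⟨fsplit n S, sigma_fsplit S⟩
  rw [← Fintype.sum_bijective _ hbij _ _ ?_]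
  intro I
  rw [Finset.card_univ]
  beta_reduce
  have hfs : fsplit n (Finset.univ.sigma I) = I := funext fun i => fsplit_sigma I i
  have hci : ∀ i, (I i).card ≤ n i := fun i => by
    simpa using Finset.card_le_univ (I i)
  have hcard : (Finset.univ.sigma I).card = ∑ i, (I i).card := by
    rw [Finset.card_sigma]
  have hN : Fintype.card ((i : Fin d) × Fin (n i)) = ∑ i, n i := by
    simp
  have hprod : (∏ i, σ ^ (I i).card * (1 - σ) ^ (n i - (I i).card))
      = σ ^ ((Finset.univ.sigma I).card)
        * (1 - σ) ^ (Fintype.card ((i : Fin d) × Fin (n i)) - (Finset.univ.sigma I).card) := by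
    rw [Finset.prod_mul_distrib, Finset.prod_pow_eq_pow_sum, Finset.prod_pow_eq_pow_sum,
      hcard, hN]
    congr 2
    have hsum : ∑ i, (n i - (I i).card) + ∑ i, (I i).card = ∑ i, n i := by
      rw [← Finset.sum_add_distrib]
      exact Finset.sum_congr rfl fun i _ => Nat.sub_add_cancel (hci i)
    omega
  by_cases hE : E I
  · rw [if_pos hE, hfs, ind_pos hE, mul_one, hprod]
  · rw [if_neg hE, hfs, ind_neg hE, mul_zero]

def uflat (n : Fin d → ℕ) (S : Finset ((i : Fin d) × Fin (n i))) : Fin d → Finset ℕ :=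
  fun i => (fsplit n S i).image Fin.val

lemma mem_uflat {S : Finset ((i : Fin d) × Fin (n i))} {i : Fin d} {v : ℕ} :
    v ∈ uflat n S i ↔ ∃ a : Fin (n i), (⟨i, a⟩ : (i : Fin d) × Fin (n i)) ∈ S ∧ (a : ℕ) = v := by
  simp [uflat, mem_fsplit, Finset.mem_image]

lemma card_eq_sum_uflat (S : Finset ((i : Fin d) × Fin (n i))) :
    S.card = ∑ i, (uflat n S i).card := by
  rw [card_eq_sum_fsplit S]
  exact Finset.sum_congr rfl fun i _ =>
    (Finset.card_image_of_injective _ Fin.val_injective).symm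

lemma uflat_mono {S S' : Finset ((i : Fin d) × Fin (n i))} (h : S ⊆ S') (i : Fin d) :
    uflat n S i ⊆ uflat n S' i := by
  intro v hv
  rw [mem_uflat] at hv ⊢
  obtain ⟨a, ha, hav⟩ := hv
  exact ⟨a, h ha, hav⟩

lemma uflat_sdiff {S S' : Finset ((i : Fin d) × Fin (n i))} (h : S ⊆ S') (i : Fin d) :
    uflat n S' i \ uflat n S i = uflat n (S' \ S) i := by
  ext v
  rw [Finset.mem_sdiff, mem_uflat, mem_uflat, mem_uflat]
  constructor
  · rintro ⟨⟨a, ha, hav⟩, hnot⟩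
    refine ⟨a, Finset.mem_sdiff.2 ⟨ha, fun haS => hnot ⟨a, haS, hav⟩⟩, hav⟩
  · rintro ⟨a, haSS, hav⟩
    obtain ⟨ha', haS⟩ := Finset.mem_sdiff.1 haSS
    refine ⟨⟨a, ha', hav⟩, ?_⟩
    rintro ⟨a', ha'S, ha'v⟩
    have : a' = a := Fin.val_injective (by rw [ha'v, hav])
    exact haS (this ▸ ha'S)

lemma uflat_filter (S : Finset ((i : Fin d) × Fin (n i))) (J : Fin d → Finset ℕ) (i : Fin d) :
    uflat n (S.filter (fun a => (a.2 : ℕ) ∈ J a.1)) i = uflat n S i ∩ J i := by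
  ext v
  rw [Finset.mem_inter, mem_uflat, mem_uflat]
  constructor
  · rintro ⟨a, ha, hav⟩
    obtain ⟨haS, haJ⟩ := Finset.mem_filter.1 ha
    exact ⟨⟨a, haS, hav⟩, hav ▸ haJ⟩
  · rintro ⟨⟨a, haS, hav⟩, hvJ⟩
    exact ⟨a, Finset.mem_filter.2 ⟨haS, by rw [hav]; exact hvJ⟩, hav⟩

lemma trestrict_trestrict {F : Type} [Field F] (T : TensorD F d) (A B : Fin d → Finset ℕ) :
    trestrict (trestrict T A) B = trestrict T (fun i => A i ∩ B i) := by
  ext x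
  simp only [trestrict, Finsupp.filter_apply]
  by_cases hA : ∀ i, x i ∈ A i
  · by_cases hB : ∀ i, x i ∈ B i
    · rw [if_pos hB, if_pos hA, if_pos (fun i => Finset.mem_inter.2 ⟨hA i, hB i⟩)]
    · rw [if_neg hB, if_neg (fun h => hB fun i => (Finset.mem_inter.1 (h i)).2)]
  · by_cases hB : ∀ i, x i ∈ B i
    · rw [if_pos hB, if_neg hA, if_neg (fun h => hA fun i => (Finset.mem_inter.1 (h i)).1)]
    · rw [if_neg hB, if_neg (fun h => hB fun i => (Finset.mem_inter.1 (h i)).2)]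

lemma trestrict_eq_self {F : Type} [Field F] (T : TensorD F d) (I : Fin d → Finset ℕ)
    (h : ∀ x ∈ T.support, ∀ i, x i ∈ I i) : trestrict T I = T := by
  ext x
  rw [trestrict, Finsupp.filter_apply]
  by_cases hx : ∀ i, x i ∈ I i
  · rw [if_pos hx]
  · rw [if_neg hx]
    rcases eq_or_ne (T x) 0 with h0 | h0
    · rw [h0]
    · exact absurd (h x (Finsupp.mem_support_iff.2 h0)) hx

end C

lemma exists_tau (σ β' M : ℝ) (hσ0 : 0 < σ) (hσ1 : σ ≤ 1) (hβ'0 : 0 < β') (hM : 0 ≤ M) :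
    ∃ (k : ℕ) (τ : ℝ), 0 < k ∧ 0 ≤ τ ∧ τ ≤ 1 ∧ τ ^ k = σ ∧
      ∀ (N : ℕ) (r : ℝ), 1 ≤ r → (N : ℝ) ≤ M * r →
        (N.choose ⌈β' * r / 2⌉₊ : ℝ) * (1 - τ) ^ (⌈β' * r / 2⌉₊ : ℕ) ≤ Real.exp (-r) := by
  set ε := Real.exp (-(2 / β') * (1 + M * Real.log 2)) with hε
  have hlog2 : 0 < Real.log 2 := Real.log_pos one_lt_two
  have hexp_neg : -(2 / β') * (1 + M * Real.log 2) < 0 := by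
    have h1 : 0 < 2 / β' := by positivity
    have h2 : 0 < 1 + M * Real.log 2 := by nlinarith
    nlinarith
  have hε0 : 0 < ε := Real.exp_pos _
  have hε1 : ε < 1 := by rw [hε]; exact Real.exp_lt_one_iff.2 hexp_neg
  set k : ℕ := max 1 ⌈(-Real.log σ) / ε⌉₊ with hk
  have hk1 : 0 < k := lt_of_lt_of_le one_pos (le_max_left _ _)
  have hk0R : (0:ℝ) < (k:ℝ) := by exact_mod_cast hk1
  set τ := σ ^ ((k:ℝ)⁻¹) with hτdef
  have hτ0 : 0 < τ := Real.rpow_pos_of_pos hσ0 _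
  have hτ1 : τ ≤ 1 := Real.rpow_le_one hσ0.le hσ1 (by positivity)
  have hτk : τ ^ k = σ := by
    rw [hτdef, ← Real.rpow_natCast (σ ^ ((k:ℝ)⁻¹)) k, ← Real.rpow_mul hσ0.le,
      inv_mul_cancel₀ (ne_of_gt hk0R), Real.rpow_one]
  have hτeps : 1 - τ ≤ ε := by
    have h1 : Real.log σ ≤ 0 := Real.log_nonpos hσ0.le hσ1
    have h2 : (-Real.log σ) / ε ≤ (k : ℝ) := by
      calc (-Real.log σ)/ε ≤ (⌈(-Real.log σ)/ε⌉₊ : ℝ) := Nat.le_ceil _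
        _ ≤ (k:ℝ) := by exact_mod_cast le_max_right 1 _
    have h3 : -Real.log σ ≤ (k:ℝ) * ε := by
      rw [div_le_iff₀ hε0] at h2; linarith
    have h4 : 1 + Real.log σ * (k:ℝ)⁻¹ ≤ τ := by
      rw [hτdef, Real.rpow_def_of_pos hσ0]
      have := Real.add_one_le_exp (Real.log σ * (k:ℝ)⁻¹)
      linarith
    have h8 : -ε ≤ Real.log σ * (k:ℝ)⁻¹ := by
      have h5 : (-ε) * (k:ℝ) ≤ Real.log σ := by nlinarith
      have h6 : (-ε) * (k:ℝ) * (k:ℝ)⁻¹ ≤ Real.log σ * (k:ℝ)⁻¹ :=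
        mul_le_mul_of_nonneg_right h5 (by positivity)
      have h7 : (-ε) * (k:ℝ) * (k:ℝ)⁻¹ = -ε := by field_simp
      linarith
    linarith
  refine ⟨k, τ, hk1, hτ0.le, hτ1, hτk, ?_⟩
  intro N r hr hNMr
  set m := ⌈β' * r / 2⌉₊ with hm
  have hx0 : (0:ℝ) < β' * r / 2 := by nlinarith
  have hchoose : (N.choose m : ℝ) ≤ 2 ^ N := by
    have h1 : N.choose m ≤ 2 ^ N := by
      by_cases hmN : m ≤ N
      · calc N.choose m ≤ ∑ j ∈ Finset.range (N+1), N.choose j :=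
            Finset.single_le_sum (fun j _ => Nat.zero_le _) (Finset.mem_range.2 (by omega))
          _ = 2 ^ N := Nat.sum_range_choose N
      · rw [Nat.choose_eq_zero_of_lt (by omega)]; exact Nat.zero_le _
    exact_mod_cast h1
  have h1τ0 : (0:ℝ) ≤ 1 - τ := by linarith
  have hpow1 : (1 - τ) ^ m ≤ ε ^ m := pow_le_pow_left₀ h1τ0 hτeps m
  have h2N : (2:ℝ) ^ N ≤ (2:ℝ) ^ (M * r) := by
    rw [← Real.rpow_natCast 2 N]
    exact Real.rpow_le_rpow_of_exponent_le one_le_two hNMr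
  have hεm : ε ^ m ≤ ε ^ (β' * r / 2) := by
    rw [← Real.rpow_natCast ε m]
    exact Real.rpow_le_rpow_of_exponent_ge hε0 hε1.le (Nat.le_ceil _)
  have hprod : (2:ℝ) ^ (M*r) * ε ^ (β'*r/2) = Real.exp (-r) := by
    rw [Real.rpow_def_of_pos two_pos, hε, Real.rpow_def_of_pos hε0, hε, Real.log_exp,
      ← Real.exp_add]
    congr 1
    field_simp
    ring
  calc (N.choose m : ℝ) * (1-τ)^m
      ≤ (2:ℝ)^(M*r) * ε^(β'*r/2) := by
        apply mul_le_mul (le_trans hchoose h2N) (le_trans hpow1 hεm) (by positivity)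
          (by positivity)
    _ = Real.exp (-r) := hprod


/-- **Random restriction theorem from the linear core property** (Theorem 4.3): if a rank
function on `d`-tensors over a field `F` is nonnegative, satisfies the linear core property
(with constants `L, β > 0` and rank threshold `r₀`), monotonicity under restrictions and the
restriction Lipschitz property, then for every `σ ∈ (0,1]` there are `C, κ > 0` such that for
every `d`-tensor `T` on `[n₁]×⋯×[n_d]`, the restriction of `T` to `σ`-random subsets
`Iᵢ ⊆ [nᵢ]` has rank at least `κ·rank T` with probability at least `1 - C·e^{-κ·rank T}`. -/
theorem random_restriction_from_linear_core
    (F : Type) [Field F] (d : ℕ) (rank : TensorD F d → ℝ)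
    (L β r₀ : ℝ) (hL : 0 < L) (hβ : 0 < β)
    -- rank takes nonnegative values
    (hnn : ∀ T, 0 ≤ rank T)
    -- linear core property with constants L, β and threshold r₀
    (hcore : ∀ T : TensorD F d, r₀ ≤ rank T →
      ∃ J : Fin d → Finset ℕ, (∀ i, ((J i).card : ℝ) ≤ L * rank T) ∧
        β * rank T ≤ rank (trestrict T J))
    -- monotonicity under restrictions
    (hmono : ∀ (T : TensorD F d) (I : Fin d → Finset ℕ), rank (trestrict T I) ≤ rank T)
    -- restriction Lipschitz property
    (hlip : ∀ (T : TensorD F d) (I J : Fin d → Finset ℕ), (∀ i, I i ⊆ J i) →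
      rank (trestrict T J) ≤ rank (trestrict T I) + ∑ i, ((J i \ I i).card : ℝ))
    (σ : ℝ) (hσ0 : 0 < σ) (hσ1 : σ ≤ 1) :
    ∃ C κ : ℝ, 0 < C ∧ 0 < κ ∧
      ∀ (n : Fin d → ℕ) (T : TensorD F d),
        -- T is a tensor on [n₁]×⋯×[n_d]
        (∀ x ∈ T.support, ∀ i, x i < n i) →
        1 - C * Real.exp (-κ * rank T) ≤
          tensorPr n σ (fun I =>
            κ * rank T ≤ rank (trestrict T (fun i => (I i).image Fin.val))) := by
  classical
  set β' := min β 1 with hβ'def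
  have hβ'0 : 0 < β' := lt_min hβ one_pos
  have hβ'1 : β' ≤ 1 := min_le_right _ _
  set M := (d:ℝ) * L with hMdef
  have hM0 : 0 ≤ M := by positivity
  obtain ⟨k, τ, hk1, hτ0, hτ1, hτk, hτstep⟩ := exists_tau σ β' M hσ0 hσ1 hβ'0 hM0
  have hγ0 : 0 < β' / 2 := by positivity
  have hγ1 : β' / 2 ≤ 1 := by linarith
  refine ⟨(k:ℝ) + Real.exp (max r₀ 1), (β'/2) ^ k, by positivity, pow_pos hγ0 k, ?_⟩
  intro n T hsupp
  set κ := (β'/2) ^ k with hκdef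
  set R := max r₀ 1 with hRdef
  set C := (k:ℝ) + Real.exp R with hCdef
  set g : Finset ((i : Fin d) × Fin (n i)) → ℝ :=
    fun S => rank (trestrict T (uflat n S)) with hgdef
  have hguniv : g Finset.univ = rank T := by
    show rank (trestrict T (uflat n Finset.univ)) = rank T
    have h := trestrict_eq_self T (uflat n Finset.univ) ?_
    · rw [h]
    · intro x hx i
      rw [mem_uflat]
      exact ⟨⟨x i, hsupp x hx i⟩, Finset.mem_univ _, rfl⟩
  have hg0 : ∀ S, 0 ≤ g S := fun S => hnn _
  have hgmono : ∀ S S' : Finset ((i : Fin d) × Fin (n i)), S ⊆ S' → g S ≤ g S' := by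
    intro S S' hSS
    have h2 : trestrict T (uflat n S) = trestrict (trestrict T (uflat n S')) (uflat n S) := by
      rw [trestrict_trestrict]
      congr 1
      funext i
      rw [Finset.inter_eq_right.2 (uflat_mono hSS i)]
    calc g S = rank (trestrict (trestrict T (uflat n S')) (uflat n S)) := congrArg rank h2
      _ ≤ rank (trestrict T (uflat n S')) := hmono _ _
  have hglip : ∀ S S' : Finset ((i : Fin d) × Fin (n i)), S ⊆ S' →
      g S' ≤ g S + ((S' \ S).card : ℝ) := by
    intro S S' hSS
    have h := hlip T (uflat n S) (uflat n S') (fun i => uflat_mono hSS i)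
    have hcardeq : ∑ i, ((uflat n S' i \ uflat n S i).card : ℝ) = ((S' \ S).card : ℝ) := by
      rw [card_eq_sum_uflat (S' \ S)]
      push_cast
      exact Finset.sum_congr rfl fun i _ => by rw [uflat_sdiff hSS i]
    rw [hcardeq] at h
    exact h
  have hgcore : ∀ S : Finset ((i : Fin d) × Fin (n i)), r₀ ≤ g S →
      ∃ J, J ⊆ S ∧ (J.card : ℝ) ≤ M * g S ∧ β' * g S ≤ g J := by
    intro S hr₀S
    obtain ⟨J, hJc, hJr⟩ := hcore (trestrict T (uflat n S)) hr₀S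
    refine ⟨S.filter (fun a => (a.2 : ℕ) ∈ J a.1), Finset.filter_subset _ _, ?_, ?_⟩
    · have h1 : ((S.filter (fun a => (a.2:ℕ) ∈ J a.1)).card : ℝ)
          = ∑ i, ((uflat n (S.filter (fun a => (a.2:ℕ) ∈ J a.1)) i).card : ℝ) := by
        rw [card_eq_sum_uflat]
        push_cast
        rfl
      rw [h1]
      calc ∑ i, ((uflat n (S.filter (fun a => (a.2:ℕ) ∈ J a.1)) i).card:ℝ)
          ≤ ∑ i, ((J i).card : ℝ) := by
            refine Finset.sum_le_sum fun i _ => ?_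
            rw [uflat_filter]
            exact_mod_cast Finset.card_le_card Finset.inter_subset_right
        _ ≤ ∑ _i : Fin d, L * rank (trestrict T (uflat n S)) :=
            Finset.sum_le_sum fun i _ => hJc i
        _ = M * g S := by
            rw [Finset.sum_const, Finset.card_univ, Fintype.card_fin, nsmul_eq_mul]
            rw [hMdef, hgdef]
            ring
    · have heq : trestrict T (uflat n (S.filter (fun a => (a.2:ℕ) ∈ J a.1)))
          = trestrict (trestrict T (uflat n S)) J := by
        rw [trestrict_trestrict]
        congr 1
        funext i
        rw [uflat_filter]
      calc β' * g S ≤ β * g S := mul_le_mul_of_nonneg_right (min_le_left _ _) (hg0 S)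
        _ ≤ rank (trestrict (trestrict T (uflat n S)) J) := hJr
        _ = g (S.filter (fun a => (a.2:ℕ) ∈ J a.1)) := (congrArg rank heq).symm
  have hbridge : tensorPr n σ (fun I =>
        κ * rank T ≤ rank (trestrict T (fun i => (I i).image Fin.val)))
      = RRaux.prS (Finset.univ : Finset ((i : Fin d) × Fin (n i))) σ
          (fun S => κ * rank T ≤ g S) := by
    rw [tensorPr_eq_prS]
    rfl
  rw [hbridge]
  have hexpneg : (0:ℝ) < Real.exp (-κ * rank T) := Real.exp_pos _
  by_cases hcase : R ≤ κ * rank T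
  · have hclaim := RRaux.claim_lemma g r₀ M β' τ hβ'0 hβ'1 hτ0 hτ1 hg0 hgmono hglip hgcore
      (fun N r' hr' hN => hτstep N r' ((le_max_right r₀ 1).trans hr') hN) k Finset.univ
      (by rw [hguniv]; exact hcase)
    rw [hguniv, hτk] at hclaim
    have hev : RRaux.prS (Finset.univ : Finset ((i : Fin d) × Fin (n i))) σ
          (fun I => (β'/2)^k * rank T ≤ g (Finset.univ ∩ I))
        = RRaux.prS (Finset.univ : Finset ((i : Fin d) × Fin (n i))) σ
          (fun S => κ * rank T ≤ g S) := by
      refine RRaux.prS_congr σ fun I _ => ?_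
      rw [Finset.univ_inter, hκdef]
    rw [hev] at hclaim
    have hne : Real.exp (-((β'/2)^k * rank T)) = Real.exp (-κ * rank T) := by
      rw [hκdef]; ring_nf
    rw [hne] at hclaim
    have hCk : (k:ℝ) ≤ C := by
      rw [hCdef]
      have := Real.exp_pos R
      linarith
    have : C * Real.exp (-κ * rank T) ≥ (k:ℝ) * Real.exp (-κ * rank T) :=
      mul_le_mul_of_nonneg_right hCk hexpneg.le
    linarith
  · push_neg at hcase
    have h0 : (0:ℝ) ≤ RRaux.prS (Finset.univ : Finset ((i : Fin d) × Fin (n i))) σ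
        (fun S => κ * rank T ≤ g S) := RRaux.prS_nonneg hσ0.le hσ1 _
    have h1 : Real.exp R * Real.exp (-κ * rank T) = Real.exp (R + (-κ * rank T)) :=
      (Real.exp_add _ _).symm
    have h2 : 1 ≤ Real.exp (R + (-κ * rank T)) := by
      have h3 := Real.add_one_le_exp (R + (-κ * rank T))
      nlinarith
    have h4 : Real.exp R * Real.exp (-κ * rank T) ≤ C * Real.exp (-κ * rank T) := by
      apply mul_le_mul_of_nonneg_right ?_ hexpneg.le
      rw [hCdef]
      have : (0:ℝ) ≤ (k:ℝ) := Nat.cast_nonneg k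
      linarith
    linarith
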